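/- arXiv:2204.04631 — 4 statements merged into one kernel-verified Lean document; each statement's English description precedes it below -/
import Mathlib

section
/- Let T be any bounded linear operator on ℓ². Then the open unit disk {z ∈ ℂ : |z| < 1} is contained in the numerical range W(F_T) of the Foguel operator F_T; consequently the numerical radius satisfies w(F_T) ≥ 1. -/
noncomputable section

open scoped InnerProductSpace

/-- The complex Hilbert space `ℓ²(ℕ, ℂ)`. -/
abbrev l2 : Type := lp (fun _ : ℕ => ℂ) 2

/-- The Hilbert space direct sum `ℓ² ⊕ ℓ²`. -/
abbrev H2 : Type := WithLp 2 (l2 × l2)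

/-- The numerical range `W(A) = {⟨Ax, x⟩ : ‖x‖ = 1}` of a bounded linear operator,
with the inner product `⟨u, v⟩` linear in the first argument `u`
(so `⟨Ax, x⟩` is `inner x (A x)` in Mathlib's convention). -/
def numRange {E : Type*} [NormedAddCommGroup E] [InnerProductSpace ℂ E]
    (A : E →L[ℂ] E) : Set ℂ :=
  {z : ℂ | ∃ x : E, ‖x‖ = 1 ∧ (inner ℂ x (A x) : ℂ) = z}

/-- The numerical radius `w(A) = sup {|z| : z ∈ W(A)}`. -/
def numRadius {E : Type*} [NormedAddCommGroup E] [InnerProductSpace ℂ E]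
    (A : E →L[ℂ] E) : ℝ :=
  sSup ((fun z : ℂ => ‖z‖) '' numRange A)

/-- For any bounded operator `T` on `ℓ²`, the open unit disk is contained in the numerical
range of the Foguel operator `F_T = [[S*, T], [0, S]]`, and hence `w(F_T) ≥ 1`. -/
theorem open_unit_disk_subset_numRange_foguel
    (T S : l2 →L[ℂ] l2)
    (hS : ∀ x : l2, (S x) 0 = 0 ∧ ∀ n : ℕ, (S x) (n + 1) = x n)
    (F : H2 →L[ℂ] H2)
    (hF : ∀ x y : l2, F ((WithLp.equiv 2 (l2 × l2)).symm (x, y)) =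
      (WithLp.equiv 2 (l2 × l2)).symm ((ContinuousLinearMap.adjoint S) x + T y, S y)) :
    Metric.ball (0 : ℂ) 1 ⊆ numRange F ∧ 1 ≤ numRadius F := by
  have key : Metric.ball (0 : ℂ) 1 ⊆ numRange F := by
    intro z hz
    rw [mem_ball_zero_iff] at hz
    set r : ℝ := ‖z‖ with hr
    have hr0 : 0 ≤ r := norm_nonneg z
    have hr2 : r ^ 2 < 1 := by nlinarith
    have hr2' : 0 ≤ r ^ 2 := sq_nonneg r
    have hpos : 0 < 1 - r ^ 2 := by linarith
    set c : ℝ := Real.sqrt (1 - r ^ 2) with hc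
    have hc0 : 0 ≤ c := Real.sqrt_nonneg _
    have hc2 : c ^ 2 = 1 - r ^ 2 := Real.sq_sqrt (le_of_lt hpos)
    set f : ℕ → ℂ := fun n => (c : ℂ) * z ^ n with hf'
    have hnf : ∀ n, ‖f n‖ = c * r ^ n := by
      intro n
      rw [hf']
      rw [norm_mul, norm_pow, Complex.norm_real, Real.norm_eq_abs, abs_of_nonneg hc0]
    have hpow : (fun n => ‖f n‖ ^ (2 : ℕ)) = fun n => c ^ 2 * (r ^ 2) ^ n := by
      funext n
      rw [hnf n, mul_pow, ← pow_mul, mul_comm n 2, pow_mul]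
    -- summability of the squared norms
    have hsum2 : Summable fun n => ‖f n‖ ^ (2 : ℕ) := by
      rw [hpow]
      exact (summable_geometric_of_lt_one hr2' hr2).mul_left _
    have hmem : Memℓp f 2 := by
      apply memℓp_gen
      rw [show ENNReal.toReal 2 = ((2:ℕ):ℝ) by norm_num]
      simp only [Real.rpow_natCast]
      exact hsum2
    set x : l2 := ⟨f, hmem⟩ with hx
    have hxapp : ∀ n, x n = f n := fun n => rfl
    -- norm of x is 1
    have htsum : ∑' n, ‖f n‖ ^ (2 : ℕ) = 1 := by
      rw [hpow, tsum_mul_left, tsum_geometric_of_lt_one hr2' hr2, hc2]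
      field_simp
    have hnorm : ‖x‖ = 1 := by
      have h3 : ‖x‖ ^ (2 : ℕ) = 1 := by
        have h := lp.norm_rpow_eq_tsum (p := 2) (E := fun _ : ℕ => ℂ) (by norm_num) x
        rw [show ENNReal.toReal 2 = ((2:ℕ):ℝ) by norm_num] at h
        simp only [Real.rpow_natCast] at h
        rw [h]
        exact htsum
      have h4 : (‖x‖ - 1) * (‖x‖ + 1) = 0 := by nlinarith [h3]
      rcases mul_eq_zero.mp h4 with h | h
      · linarith
      · nlinarith [norm_nonneg x]
    set X : H2 := (WithLp.equiv 2 (l2 × l2)).symm (x, 0) with hX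
    have hXfst : X.fst = x := rfl
    have hXsnd : X.snd = 0 := rfl
    have hnormX : ‖X‖ = 1 := by
      rw [@norm_eq_sqrt_re_inner ℂ, WithLp.prod_inner_apply, show (WithLp.ofLp X).fst = x from hXfst,
        show (WithLp.ofLp X).snd = 0 from hXsnd, inner_zero_left,
        add_zero, ← @norm_eq_sqrt_re_inner ℂ, hnorm]
    refine ⟨X, hnormX, ?_⟩
    have hFX : F X = (WithLp.equiv 2 (l2 × l2)).symm ((ContinuousLinearMap.adjoint S) x + T 0, S 0) := hF x 0
    have hinner : (inner ℂ X (F X) : ℂ) = ⟪x, (ContinuousLinearMap.adjoint S) x⟫_ℂ := by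
      have step : (inner ℂ X (F X) : ℂ)
          = ⟪x, (ContinuousLinearMap.adjoint S) x + T 0⟫_ℂ + ⟪(0 : l2), S 0⟫_ℂ := by
        rw [hFX]; rfl
      rw [step, map_zero, add_zero, inner_zero_left, add_zero]
    rw [hinner, ContinuousLinearMap.adjoint_inner_right]
    -- inner product as tsum
    rw [lp.inner_eq_tsum]
    have hsummable : Summable fun n => (inner ℂ ((S x) n) (x n) : ℂ) := lp.summable_inner (S x) x
    rw [hsummable.tsum_eq_zero_add]
    have h0 : (inner ℂ ((S x) 0) (x 0) : ℂ) = 0 := by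
      rw [(hS x).1]
      simp only [RCLike.inner_apply', map_zero, zero_mul]
    rw [h0, zero_add]
    have hshift : ∀ n : ℕ, (inner ℂ ((S x) (n + 1)) (x (n + 1)) : ℂ)
        = (c : ℂ) ^ 2 * z * ((starRingEnd ℂ) z * z) ^ n := by
      intro n
      rw [(hS x).2 n, hxapp, hxapp, hf']
      simp only [RCLike.inner_apply', map_mul, map_pow, Complex.conj_ofReal]
      ring
    simp only [hshift]
    rw [tsum_mul_left, tsum_geometric_of_norm_lt_one (by
      rw [norm_mul, RCLike.norm_conj]; nlinarith)]
    have hcz : (starRingEnd ℂ) z * z = ((r ^ 2 : ℝ) : ℂ) := by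
      rw [RCLike.conj_mul]
      push_cast
      rw [← hr]
      norm_num
    rw [hcz]
    have : ((c : ℂ)) ^ 2 = ((1 - r ^ 2 : ℝ) : ℂ) := by
      push_cast [← hc2]; ring
    rw [this]
    have hne : ((1 - r ^ 2 : ℝ) : ℂ) ≠ 0 := by
      simp only [ne_eq, Complex.ofReal_eq_zero]; linarith
    have h1m : (1 : ℂ) - ((r ^ 2 : ℝ) : ℂ) = ((1 - r ^ 2 : ℝ) : ℂ) := by push_cast; ring
    rw [h1m]
    rw [mul_comm (((1 - r ^ 2 : ℝ)) : ℂ) z, mul_assoc, mul_inv_cancel₀ hne, mul_one]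
  refine ⟨key, ?_⟩
  -- numerical radius bound
  have bdd : BddAbove ((fun z : ℂ => ‖z‖) '' numRange F) := by
    refine ⟨‖F‖, ?_⟩
    rintro a ⟨w, ⟨x, hx1, hx2⟩, rfl⟩
    rw [← hx2]
    calc ‖(inner ℂ x (F x) : ℂ)‖ = ‖(inner ℂ x (F x) : ℂ)‖ := rfl
      _ ≤ ‖x‖ * ‖F x‖ := norm_inner_le_norm x (F x)
      _ ≤ ‖x‖ * (‖F‖ * ‖x‖) := by
          exact mul_le_mul_of_nonneg_left (F.le_opNorm x) (norm_nonneg x)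
      _ = ‖F‖ := by rw [hx1]; ring
  refine le_of_forall_lt fun d hd => ?_
  set t : ℝ := (max d 0 + 1) / 2 with ht
  have ht0 : 0 ≤ t := by
    have := le_max_right d 0; simp only [ht]; linarith
  have ht1 : t < 1 := by
    have h1 : max d 0 < 1 := max_lt hd one_pos
    simp only [ht]; linarith
  have hdt : d < t := by
    have := le_max_left d 0
    have h1 : max d 0 < 1 := max_lt hd one_pos
    simp only [ht]; linarith
  have hmem : (t : ℂ) ∈ numRange F := key (by
    rw [mem_ball_zero_iff, Complex.norm_real, Real.norm_eq_abs, abs_of_nonneg ht0]; exact ht1)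
  have : t ≤ numRadius F := by
    apply le_csSup bdd
    refine ⟨(t : ℂ), hmem, ?_⟩
    show ‖(t : ℂ)‖ = t
    rw [Complex.norm_real, Real.norm_eq_abs, abs_of_nonneg ht0]
  linarith
end
end

section
/- For every a ∈ ℂ, the numerical radius of the Foguel operator F_{aI} equals 1 + |a|/2. -/
noncomputable section

open scoped ComplexConjugate

def uN (N : ℕ) : l2 := ∑ i ∈ Finset.range N, lp.single 2 i (1 : ℂ)

lemma inner_uN_left (N : ℕ) (f : l2) : (inner ℂ (uN N) f : ℂ) = ∑ i ∈ Finset.range N, f i := by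
  rw [uN, sum_inner]; simp [lp.inner_single_left]

lemma uN_apply (N : ℕ) (j : ℕ) : (uN N) j = if j < N then 1 else 0 := by
  rw [uN, lp.coeFn_sum]
  simp [lp.single_apply, Finset.sum_ite_eq, Finset.mem_range]

lemma inner_uN_uN (N : ℕ) : (inner ℂ (uN N) (uN N) : ℂ) = N := by
  rw [inner_uN_left]
  rw [Finset.sum_congr rfl (fun i hi => by rw [uN_apply, if_pos (Finset.mem_range.mp hi)])]
  simp

lemma norm_uN_sq (N : ℕ) : ‖uN N‖ ^ 2 = N := by
  have := inner_self_eq_norm_sq (𝕜 := ℂ) (uN N)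
  rw [inner_uN_uN] at this
  simpa using this.symm

section withS
variable (S : l2 →L[ℂ] l2)
    (hS : ∀ x : l2, (S x) 0 = 0 ∧ ∀ n : ℕ, (S x) (n + 1) = x n)
include hS

lemma inner_uN_SuN (M : ℕ) : (inner ℂ (uN (M+1)) (S (uN (M+1))) : ℂ) = M := by
  rw [inner_uN_left, Finset.sum_range_succ']
  rw [(hS _).1, add_zero]
  rw [Finset.sum_congr rfl (fun i hi => by
    rw [(hS _).2, uN_apply, if_pos (Nat.lt_succ_of_lt (Finset.mem_range.mp hi))])]
  simp

lemma S_inner_preserve (x y : l2) : (inner ℂ (S x) (S y) : ℂ) = inner ℂ x y := by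
  rw [lp.inner_eq_tsum, lp.inner_eq_tsum]
  have hs : Summable (fun i => (inner ℂ ((S x) i) ((S y) i) : ℂ)) := lp.summable_inner (S x) (S y)
  rw [hs.tsum_eq_zero_add]
  simp [(hS x).1, (hS x).2, (hS y).1, (hS y).2]

lemma S_norm_preserve (x : l2) : ‖S x‖ = ‖x‖ := by
  have h1 := inner_self_eq_norm_sq (𝕜 := ℂ) (S x)
  have h2 := inner_self_eq_norm_sq (𝕜 := ℂ) x
  rw [S_inner_preserve S hS, h2] at h1
  nlinarith [norm_nonneg (S x), norm_nonneg x]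

end withS

set_option maxHeartbeats 1000000 in
/-- For every `a ∈ ℂ`, the numerical radius of the Foguel operator `F_{aI}`
equals `1 + |a|/2`. -/
theorem numRadius_foguel_eq (a : ℂ)
    (S : l2 →L[ℂ] l2)
    (hS : ∀ x : l2, (S x) 0 = 0 ∧ ∀ n : ℕ, (S x) (n + 1) = x n)
    (F : H2 →L[ℂ] H2)
    (hF : ∀ x y : l2, F ((WithLp.equiv 2 (l2 × l2)).symm (x, y)) =
      (WithLp.equiv 2 (l2 × l2)).symm ((ContinuousLinearMap.adjoint S) x + a • y, S y)) :
    numRadius F = 1 + ‖a‖ / 2 := by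
  -- inner products of v with F v
  have hinner : ∀ x y : l2,
      (inner ℂ ((WithLp.equiv 2 (l2 × l2)).symm (x, y))
        (F ((WithLp.equiv 2 (l2 × l2)).symm (x, y))) : ℂ)
      = inner ℂ x ((ContinuousLinearMap.adjoint S) x) + a * inner ℂ x y + inner ℂ y (S y) := by
    intro x y
    rw [hF, WithLp.prod_inner_apply]
    simp only [WithLp.equiv_symm_apply, WithLp.toLp_fst, WithLp.toLp_snd]
    rw [inner_add_right, inner_smul_right]
  -- upper bound
  have hub : ∀ t ∈ (fun z : ℂ => ‖z‖) '' numRange F, t ≤ 1 + ‖a‖ / 2 := by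
    rintro t ⟨z, ⟨v, hv, hz⟩, rfl⟩
    have hveq : v = (WithLp.equiv 2 (l2 × l2)).symm (v.fst, v.snd) := rfl
    set x := v.fst
    set y := v.snd
    have hsq : ‖x‖ ^ 2 + ‖y‖ ^ 2 = 1 := by
      have := WithLp.prod_norm_sq_eq_of_L2 v
      rw [hv] at this; simpa using this.symm
    have hz' : z = inner ℂ x ((ContinuousLinearMap.adjoint S) x) + a * inner ℂ x y + inner ℂ y (S y) := by
      rw [← hz, hveq, hinner]
    have h1 : ‖inner ℂ x ((ContinuousLinearMap.adjoint S) x)‖ ≤ ‖x‖ ^ 2 := by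
      rw [ContinuousLinearMap.adjoint_inner_right]
      calc ‖(inner ℂ (S x) x : ℂ)‖ ≤ ‖S x‖ * ‖x‖ := norm_inner_le_norm _ _
        _ = ‖x‖ ^ 2 := by rw [S_norm_preserve S hS]; ring
    have h3 : ‖inner ℂ y (S y)‖ ≤ ‖y‖ ^ 2 := by
      calc ‖(inner ℂ y (S y) : ℂ)‖ ≤ ‖y‖ * ‖S y‖ := norm_inner_le_norm _ _
        _ = ‖y‖ ^ 2 := by rw [S_norm_preserve S hS]; ring
    have h2 : ‖a * inner ℂ x y‖ ≤ ‖a‖ * (‖x‖ ^ 2 + ‖y‖ ^ 2) / 2 := by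
      rw [norm_mul]
      have : ‖inner ℂ x y‖ ≤ ‖x‖ * ‖y‖ := by
        exact norm_inner_le_norm _ _
      have h4 : ‖x‖ * ‖y‖ ≤ (‖x‖ ^ 2 + ‖y‖ ^ 2) / 2 := by nlinarith [sq_nonneg (‖x‖ - ‖y‖)]
      have := norm_nonneg a
      nlinarith [norm_nonneg (inner ℂ x y : ℂ)]
    calc ‖z‖ ≤ ‖inner ℂ x ((ContinuousLinearMap.adjoint S) x)‖
          + ‖a * inner ℂ x y‖ + ‖inner ℂ y (S y)‖ := by
          rw [hz']; exact (norm_add_le _ _).trans (by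
            gcongr; exact norm_add_le _ _)
      _ ≤ ‖x‖ ^ 2 + ‖a‖ * (‖x‖ ^ 2 + ‖y‖ ^ 2) / 2 + ‖y‖ ^ 2 := by gcongr
      _ = 1 + ‖a‖ / 2 := by linear_combination (1 + ‖a‖ / 2) * hsq
  -- membership of the approximating values
  have hmem : ∀ M : ℕ, ((M : ℝ) / (M + 1) + ‖a‖ / 2) ∈ (fun z : ℂ => ‖z‖) '' numRange F := by
    intro M
    set N : ℕ := M + 1 with hN
    set ω : ℂ := if a = 0 then 1 else conj a / ‖a‖ with hω
    have hωa : a * ω = ‖a‖ := by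
      rw [hω]
      split_ifs with h
      · simp [h]
      · have h2 : a * conj a = ((‖a‖ : ℂ)) ^ 2 := by
          rw [Complex.mul_conj, Complex.normSq_eq_norm_sq]; push_cast; ring
        rw [mul_div_assoc', h2, sq, mul_div_assoc,
          div_self (by simpa using h), mul_one]
    have hωabs : ‖ω‖ = 1 := by
      rw [hω]; split_ifs with h
      · simp
      · rw [norm_div, Complex.norm_conj]
        simp [h]
    have hωω : conj ω * ω = 1 := by
      have : ω * conj ω = ((‖ω‖ : ℂ)) ^ 2 := by
        rw [Complex.mul_conj, Complex.normSq_eq_norm_sq]; push_cast; ring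
      rw [mul_comm] at this
      rw [this, hωabs]; norm_num
    set r : ℝ := (Real.sqrt (2 * N))⁻¹ with hr
    have hNpos : (0:ℝ) < N := by positivity
    have hr2 : r ^ 2 = (2 * (N:ℝ))⁻¹ := by
      rw [hr, ← Real.sqrt_inv, Real.sq_sqrt (by positivity)]
    set x : l2 := (r : ℂ) • uN N with hx
    set y : l2 := (ω * r) • uN N with hy
    set v : H2 := (WithLp.equiv 2 (l2 × l2)).symm (x, y) with hv
    have hrnn : 0 ≤ r := by rw [hr]; positivity
    have hnx : ‖x‖ ^ 2 = 1 / 2 := by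
      rw [hx, norm_smul, mul_pow, norm_uN_sq, Complex.norm_real,
        Real.norm_eq_abs, abs_of_nonneg hrnn, hr2]
      field_simp
    have hny : ‖y‖ ^ 2 = 1 / 2 := by
      rw [hy, norm_smul, mul_pow, norm_uN_sq, norm_mul, hωabs,
        one_mul, Complex.norm_real, Real.norm_eq_abs, abs_of_nonneg hrnn, hr2]
      field_simp
    have hnv : ‖v‖ = 1 := by
      have h := WithLp.prod_norm_sq_eq_of_L2 v
      rw [hv] at h
      simp only [WithLp.equiv_symm_apply, WithLp.toLp_fst, WithLp.toLp_snd] at h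
      rw [← WithLp.equiv_symm_apply, ← hv, hnx, hny] at h
      nlinarith [norm_nonneg v]
    have hA : (inner ℂ (uN N) ((ContinuousLinearMap.adjoint S) (uN N)) : ℂ) = (M:ℂ) := by
      rw [ContinuousLinearMap.adjoint_inner_right, ← inner_conj_symm,
        inner_uN_SuN S hS M]
      simp
    have hB : (inner ℂ (uN N) (uN N) : ℂ) = (N:ℂ) := inner_uN_uN N
    have hC : (inner ℂ (uN N) (S (uN N)) : ℂ) = (M:ℂ) := inner_uN_SuN S hS M
    have e1 : (inner ℂ v (F v) : ℂ)
        = ((r^2 : ℝ) : ℂ) * ((M:ℂ) + (a * ω) * (N:ℂ) + (conj ω * ω) * (M:ℂ)) := by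
      rw [hv, hinner, hx, hy]
      rw [map_smul, map_smul, inner_smul_left, inner_smul_left, inner_smul_left,
        inner_smul_right, inner_smul_right, inner_smul_right, hA, hB, hC]
      push_cast
      rw [map_mul, Complex.conj_ofReal]
      ring
    rw [hωa, hωω] at e1
    have e2 : (inner ℂ v (F v) : ℂ) = ((r^2 * (M + ‖a‖ * N + M) : ℝ) : ℂ) := by
      rw [e1]; push_cast; ring
    have e3 : r^2 * (M + ‖a‖ * N + M) = (M:ℝ)/(M+1) + ‖a‖ / 2 := by
      rw [hr2, hN]
      have h1 : ((M:ℝ)+1) ≠ 0 := by positivity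
      push_cast
      field_simp
      ring
    refine ⟨inner ℂ v (F v), ⟨v, hnv, rfl⟩, ?_⟩
    rw [e2, e3]; dsimp only; rw [Complex.norm_real, Real.norm_eq_abs, abs_of_nonneg (by positivity)]
  -- conclude
  have hne : ((fun z : ℂ => ‖z‖) '' numRange F).Nonempty := ⟨_, hmem 0⟩
  have hbdd : BddAbove ((fun z : ℂ => ‖z‖) '' numRange F) := ⟨1 + ‖a‖ / 2, hub⟩
  refine le_antisymm (csSup_le hne hub) ?_
  have hle : ∀ M : ℕ, (M:ℝ)/(M+1) + ‖a‖ / 2 ≤ numRadius F :=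
    fun M => le_csSup hbdd (hmem M)
  have ht : Filter.Tendsto (fun M : ℕ => (M:ℝ)/(M+1) + ‖a‖ / 2)
      Filter.atTop (nhds (1 + ‖a‖ / 2)) := by
    have := tendsto_natCast_div_add_atTop (1:ℝ)
    exact this.add tendsto_const_nhds
  exact le_of_tendsto' ht hle
end
end

section
/- For every a ∈ ℂ, the numerical range W(F_{aI}) is symmetric with respect to both coordinate axes: if z ∈ W(F_{aI}), then both the complex conjugate of z and −z belong to W(F_{aI}). -/
noncomputable section

namespace FoguelAux

lemma memJ (x : l2) : Memℓp (fun n : ℕ => (-1 : ℂ) ^ n * x n) 2 := by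
  have h := lp.memℓp x
  rw [memℓp_gen_iff (by norm_num)] at h ⊢
  convert h using 2 with n
  simp

/-- The diagonal `(-1)^n` isometry on `ℓ²`. -/
def J : l2 →ₗᵢ[ℂ] l2 where
  toFun x := ⟨fun n => (-1 : ℂ) ^ n * x n, memJ x⟩
  map_add' x y := by
    apply lp.ext; funext n
    simp only [lp.coeFn_add, Pi.add_apply]
    exact mul_add _ _ _
  map_smul' c x := by
    apply lp.ext; funext n
    simp only [lp.coeFn_smul, Pi.smul_apply, smul_eq_mul, RingHom.id_apply]
    ring
  norm_map' x := by
    rw [lp.norm_eq_tsum_rpow (by norm_num), lp.norm_eq_tsum_rpow (by norm_num) x]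
    congr 1
    apply tsum_congr (fun n => ?_)
    congr 1
    simp

@[simp] lemma J_apply (x : l2) (n : ℕ) : (J x) n = (-1 : ℂ) ^ n * x n := rfl

lemma S_J (S : l2 →L[ℂ] l2)
    (hS : ∀ x : l2, (S x) 0 = 0 ∧ ∀ n : ℕ, (S x) (n + 1) = x n) (x : l2) :
    S (J x) = -(J (S x)) := by
  apply lp.ext; funext n
  have hneg : ((-(J (S x)) : l2) : ∀ _ : ℕ, ℂ) = -(J (S x) : ∀ _ : ℕ, ℂ) := lp.coeFn_neg _
  rw [hneg]
  cases n with
  | zero =>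
    simp [(hS (J x)).1, (hS x).1]
  | succ n =>
    simp only [Pi.neg_apply, (hS (J x)).2 n, J_apply, (hS x).2 n, pow_succ]
    ring

lemma inner_F (a : ℂ) (S : l2 →L[ℂ] l2) (F : H2 →L[ℂ] H2)
    (hF : ∀ x y : l2, F ((WithLp.equiv 2 (l2 × l2)).symm (x, y)) =
      (WithLp.equiv 2 (l2 × l2)).symm ((ContinuousLinearMap.adjoint S) x + a • y, S y))
    (x y : l2) :
    (inner ℂ ((WithLp.equiv 2 (l2 × l2)).symm (x, y))
      (F ((WithLp.equiv 2 (l2 × l2)).symm (x, y))) : ℂ) =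
      inner ℂ x ((ContinuousLinearMap.adjoint S) x) + a * inner ℂ x y + inner ℂ y (S y) := by
  rw [hF, WithLp.prod_inner_apply]
  simp only [WithLp.equiv_symm_apply, WithLp.toLp_fst, WithLp.toLp_snd, inner_add_right, inner_smul_right]

lemma inner_self (x y : l2) :
    (inner ℂ ((WithLp.equiv 2 (l2 × l2)).symm (x, y))
      ((WithLp.equiv 2 (l2 × l2)).symm (x, y)) : ℂ) = inner ℂ x x + inner ℂ y y := by
  rw [WithLp.prod_inner_apply]
  simp

end FoguelAux

open FoguelAux in
/-- For every `a ∈ ℂ`, the numerical range `W(F_{aI})` is symmetric with respect to both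
coordinate axes: it is closed under complex conjugation and under negation. -/
theorem numRange_foguel_symm (a : ℂ)
    (S : l2 →L[ℂ] l2)
    (hS : ∀ x : l2, (S x) 0 = 0 ∧ ∀ n : ℕ, (S x) (n + 1) = x n)
    (F : H2 →L[ℂ] H2)
    (hF : ∀ x y : l2, F ((WithLp.equiv 2 (l2 × l2)).symm (x, y)) =
      (WithLp.equiv 2 (l2 × l2)).symm ((ContinuousLinearMap.adjoint S) x + a • y, S y)) :
    ∀ z ∈ numRange F, (starRingEnd ℂ) z ∈ numRange F ∧ -z ∈ numRange F := by
  intro z hz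
  obtain ⟨u, hu, hz⟩ := hz
  set x : l2 := u.ofLp.1 with hx
  set y : l2 := u.ofLp.2 with hy
  have hu' : u = (WithLp.equiv 2 (l2 × l2)).symm (x, y) := rfl
  rw [hu'] at hu hz
  rw [inner_F a S F hF] at hz
  -- the phase
  set b : ℂ := if a = 0 then 1 else (starRingEnd ℂ) a / a with hb
  have hbb : (starRingEnd ℂ) b * b = 1 := by
    rw [hb]
    split_ifs with h
    · simp
    · have h' : (starRingEnd ℂ) a ≠ 0 := by simpa using h
      rw [map_div₀, Complex.conj_conj, div_mul_div_comm, mul_comm a ((starRingEnd ℂ) a),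
        div_self (mul_ne_zero h' h)]
  have hab : a * b = (starRingEnd ℂ) a := by
    rw [hb]
    split_ifs with h
    · simp [h]
    · field_simp
  have hnorm : ∀ p q : l2, (inner ℂ p p + inner ℂ q q : ℂ) = inner ℂ x x + inner ℂ y y →
      ‖(WithLp.equiv 2 (l2 × l2)).symm (p, q)‖ = 1 := by
    intro p q hpq
    rw [@norm_eq_sqrt_re_inner ℂ, inner_self, hpq, ← inner_self x y,
      ← @norm_eq_sqrt_re_inner ℂ, hu]
  constructor
  · -- conjugation: witness (y, b • x)
    refine ⟨(WithLp.equiv 2 (l2 × l2)).symm (y, b • x), ?_, ?_⟩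
    · apply hnorm
      rw [inner_smul_left, inner_smul_right, ← mul_assoc, hbb, one_mul, add_comm]
    · rw [inner_F a S F hF, ← hz]
      have e1 : (starRingEnd ℂ) (inner ℂ x ((ContinuousLinearMap.adjoint S) x) : ℂ) =
          inner ℂ x (S x) := by
        rw [inner_conj_symm, ContinuousLinearMap.adjoint_inner_left]
      have e2 : (starRingEnd ℂ) (inner ℂ y (S y) : ℂ) =
          inner ℂ y ((ContinuousLinearMap.adjoint S) y) := by
        rw [inner_conj_symm, ← ContinuousLinearMap.adjoint_inner_right]
      have e3 : (starRingEnd ℂ) (inner ℂ x y : ℂ) = inner ℂ y x := inner_conj_symm y x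
      rw [map_add, map_add, map_mul, e1, e2, e3, map_smul, inner_smul_right, inner_smul_left,
        inner_smul_right]
      linear_combination (inner ℂ y x : ℂ) * hab + (inner ℂ x (S x) : ℂ) * hbb
  · -- negation: witness (J x, -(J y))
    refine ⟨(WithLp.equiv 2 (l2 × l2)).symm (J x, -(J y)), ?_, ?_⟩
    · apply hnorm
      rw [inner_neg_neg, J.inner_map_map, J.inner_map_map]
    · rw [inner_F a S F hF, ← hz]
      have h1 : (inner ℂ (J x) ((ContinuousLinearMap.adjoint S) (J x)) : ℂ) =
          -(inner ℂ x ((ContinuousLinearMap.adjoint S) x)) := by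
        rw [ContinuousLinearMap.adjoint_inner_right, S_J S hS, inner_neg_left,
          J.inner_map_map, ← ContinuousLinearMap.adjoint_inner_right]
      have h2 : (inner ℂ (J x) (-(J y)) : ℂ) = -(inner ℂ x y) := by
        rw [inner_neg_right, J.inner_map_map]
      have h3 : (inner ℂ (-(J y)) (S (-(J y))) : ℂ) = -(inner ℂ y (S y)) := by
        rw [map_neg, inner_neg_neg, S_J S hS, inner_neg_right, J.inner_map_map]
      rw [h1, h2, h3]
      ring
end
end

section
/- Let λ ≥ 1 and θ ∈ [0, π/2], and define f(t) = Re(t²) + Re(e^{2iθ}) − 4λ·Re(t)·cos θ for t on the unit circle. Then the image {f(t) : t ∈ ℂ, |t| = 1} equals the closed interval [2cos²θ − 4λcos θ, 2cos²θ + 4λcos θ] if λ·cos θ ≥ 1, and equals the closed interval [2(1 − λ²)cos²θ − 2, 2cos²θ + 4λcos θ] if λ·cos θ < 1. -/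
noncomputable section

/-- For `λ ≥ 1` and `θ ∈ [0, π/2]`, the range of
`f(t) = Re(t²) + Re(e^{2iθ}) − 4λ Re(t) cos θ` over the unit circle is
`[2cos²θ − 4λcos θ, 2cos²θ + 4λcos θ]` if `λ cos θ ≥ 1`, and
`[2(1 − λ²)cos²θ − 2, 2cos²θ + 4λcos θ]` if `λ cos θ < 1`. -/
theorem range_f_unit_circle (lam θ : ℝ) (hlam : 1 ≤ lam)
    (hθ : θ ∈ Set.Icc 0 (Real.pi / 2)) :
    (1 ≤ lam * Real.cos θ →
      {y : ℝ | ∃ t : ℂ, ‖t‖ = 1 ∧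
          y = (t ^ 2).re + (Complex.exp (2 * (θ : ℂ) * Complex.I)).re
              - 4 * lam * t.re * Real.cos θ} =
        Set.Icc (2 * Real.cos θ ^ 2 - 4 * lam * Real.cos θ)
          (2 * Real.cos θ ^ 2 + 4 * lam * Real.cos θ)) ∧
    (lam * Real.cos θ < 1 →
      {y : ℝ | ∃ t : ℂ, ‖t‖ = 1 ∧
          y = (t ^ 2).re + (Complex.exp (2 * (θ : ℂ) * Complex.I)).re
              - 4 * lam * t.re * Real.cos θ} =
        Set.Icc (2 * (1 - lam ^ 2) * Real.cos θ ^ 2 - 2)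
          (2 * Real.cos θ ^ 2 + 4 * lam * Real.cos θ)) := by
  obtain ⟨hθ0, hθ1⟩ := hθ
  set c := Real.cos θ with hc
  have hc0 : 0 ≤ c := Real.cos_nonneg_of_mem_Icc
    ⟨by linarith [Real.pi_pos], hθ1⟩
  have hc1 : c ≤ 1 := Real.cos_le_one θ
  have hre : (Complex.exp (2 * (θ : ℂ) * Complex.I)).re = 2 * c ^ 2 - 1 := by
    have h2 : (2 * (θ : ℂ) * Complex.I) = ((2 * θ : ℝ) : ℂ) * Complex.I := by
      push_cast; ring
    rw [h2, Complex.exp_ofReal_mul_I_re, Real.cos_two_mul]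
  set g : ℝ → ℝ := fun x => 2 * x ^ 2 + 2 * c ^ 2 - 2 - 4 * lam * c * x with hg
  have hgc : Continuous g := by fun_prop
  have hset : {y : ℝ | ∃ t : ℂ, ‖t‖ = 1 ∧
      y = (t ^ 2).re + (Complex.exp (2 * (θ : ℂ) * Complex.I)).re
          - 4 * lam * t.re * Real.cos θ} = g '' Set.Icc (-1 : ℝ) 1 := by
    ext y
    simp only [Set.mem_setOf_eq, Set.mem_image, Set.mem_Icc]
    constructor
    · rintro ⟨t, ht, rfl⟩
      have habs : |t.re| ≤ 1 := ht ▸ Complex.abs_re_le_norm t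
      have hsq : t.re ^ 2 + t.im ^ 2 = 1 := by
        have := Complex.sq_norm t
        rw [ht, Complex.normSq_apply] at this
        nlinarith
      refine ⟨t.re, abs_le.mp habs, ?_⟩
      have h2 : (t ^ 2).re = t.re ^ 2 - t.im ^ 2 := by
        rw [pow_two, Complex.mul_re]; ring
      rw [h2, hre, hg]
      simp only [← hc]
      nlinarith
    · rintro ⟨x, ⟨hx1, hx2⟩, rfl⟩
      have h1x : (0:ℝ) ≤ 1 - x ^ 2 := by nlinarith
      refine ⟨⟨x, Real.sqrt (1 - x ^ 2)⟩, ?_, ?_⟩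
      · have hs : ‖(⟨x, Real.sqrt (1 - x ^ 2)⟩ : ℂ)‖ ^ 2 = 1 := by
          rw [Complex.sq_norm, Complex.normSq_apply]
          simp only []
          rw [show Real.sqrt (1 - x ^ 2) * Real.sqrt (1 - x ^ 2)
            = Real.sqrt (1 - x ^ 2) ^ 2 by ring, Real.sq_sqrt h1x]
          ring
        nlinarith [norm_nonneg (⟨x, Real.sqrt (1 - x ^ 2)⟩ : ℂ)]
      · have h2 : ((⟨x, Real.sqrt (1 - x ^ 2)⟩ : ℂ) ^ 2).re
            = x ^ 2 - (1 - x ^ 2) := by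
          rw [pow_two, Complex.mul_re]
          simp only []
          rw [show Real.sqrt (1 - x ^ 2) * Real.sqrt (1 - x ^ 2)
            = Real.sqrt (1 - x ^ 2) ^ 2 by ring, Real.sq_sqrt h1x]
          ring
        rw [h2, hre, hg]
        simp only [← hc]
        ring
  rw [hset]
  constructor
  · intro hlc
    apply Set.Subset.antisymm
    · rintro y ⟨x, ⟨hx1, hx2⟩, rfl⟩
      simp only [hg, Set.mem_Icc, ← hc]
      constructor
      · nlinarith [mul_nonneg (sub_nonneg.mpr hlc) (sub_nonneg.mpr hx2),
          sq_nonneg (x - 1)]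
      · nlinarith [mul_nonneg (mul_nonneg (by linarith : (0:ℝ) ≤ lam) hc0)
          (by linarith : (0:ℝ) ≤ x + 1), sq_nonneg (x + 1)]
    · have key := intermediate_value_Icc' (by norm_num : (-1:ℝ) ≤ 1)
        hgc.continuousOn
      have he : Set.Icc (2 * c ^ 2 - 4 * lam * c) (2 * c ^ 2 + 4 * lam * c)
          = Set.Icc (g 1) (g (-1)) := by
        simp only [hg]; congr 1 <;> ring
      rw [he]; exact key
  · intro hlc
    have hlc0 : 0 ≤ lam * c := mul_nonneg (by linarith) hc0
    apply Set.Subset.antisymm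
    · rintro y ⟨x, ⟨hx1, hx2⟩, rfl⟩
      simp only [hg, Set.mem_Icc, ← hc]
      constructor
      · nlinarith [sq_nonneg (x - lam * c)]
      · nlinarith [mul_nonneg (mul_nonneg (by linarith : (0:ℝ) ≤ lam) hc0)
          (by linarith : (0:ℝ) ≤ x + 1), sq_nonneg (x + 1)]
    · have key := intermediate_value_Icc' (by linarith : (-1:ℝ) ≤ lam * c)
        hgc.continuousOn
      have he : Set.Icc (2 * (1 - lam ^ 2) * c ^ 2 - 2) (2 * c ^ 2 + 4 * lam * c)
          = Set.Icc (g (lam * c)) (g (-1)) := by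
        simp only [hg]; congr 1 <;> ring
      rw [he]
      refine key.trans (Set.image_mono ?_)
      exact Set.Icc_subset_Icc le_rfl (by linarith)
end
end
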